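/- Let α ≥ 0 and let g(z) = 1/z + Σ_{k≥1} b_k z^k be analytic on the punctured unit disc E with Σ_{k≥1} k |b_k| ≤ δ where δ < 1/(1 + 2α). Then Re(z g(z)) > α |z² g'(z) + z g(z)| for all z ∈ E. -/

import Mathlib

open Complex

theorem stmt11 (α δ : ℝ) (hα : 0 ≤ α) (hδ : δ < 1 / (1 + 2 * α))
    (b : ℕ → ℂ)
    (hSum : Summable fun k : ℕ => ((k : ℝ) + 1) * ‖b k‖)
    (hb : (∑' k : ℕ, ((k : ℝ) + 1) * ‖b k‖) ≤ δ)
    (g : ℂ → ℂ) (hg : ∀ z : ℂ, z ≠ 0 → g z = z⁻¹ + ∑' k : ℕ, b k * z ^ (k + 1)) :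
    ∀ z : ℂ, 0 < ‖z‖ → ‖z‖ < 1 →
      (z * g z).re > α * ‖(z ^ 2 * deriv g z + z * g z)‖ := by
  intro z hz0 hz1
  have hzne : z ≠ 0 := by
    intro h; rw [h] at hz0; simp at hz0
  set r := ‖z‖ with hr
  have hr0 : 0 ≤ r := (norm_nonneg z)
  have hr1 : r ≤ 1 := le_of_lt hz1
  -- summability basics
  have habs : Summable fun k : ℕ => ‖b k‖ := by
    apply hSum.of_nonneg_of_le (fun k => norm_nonneg _)
    intro k
    have : (1 : ℝ) ≤ (k : ℝ) + 1 := by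
      have : (0:ℝ) ≤ (k:ℝ) := Nat.cast_nonneg k
      linarith
    nlinarith [norm_nonneg (b k)]
  -- derivative of g
  have hderiv : deriv g z = -(z ^ 2)⁻¹ + ∑' k : ℕ, ((k : ℂ) + 1) * b k * z ^ k := by
    have hball : z ∈ Metric.ball (0 : ℂ) 1 := by
      simpa [Metric.mem_ball, Complex.dist_eq] using hz1
    have hF : HasDerivAt (fun w : ℂ => ∑' k : ℕ, b k * w ^ (k + 1))
        (∑' k : ℕ, ((k : ℂ) + 1) * b k * z ^ k) z := by
      apply hasDerivAt_tsum_of_isPreconnected hSum Metric.isOpen_ball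
        ((convex_ball (0:ℂ) 1).isPreconnected) (g := fun k w => b k * w ^ (k + 1))
        (g' := fun k w => ((k : ℂ) + 1) * b k * w ^ k)
        (y₀ := 0) ?_ ?_ (by simp) ?_ hball
      · intro n y _
        have := ((hasDerivAt_pow (n + 1) y).const_mul (b n))
        refine this.congr_deriv ?_
        push_cast [Nat.add_sub_cancel]
        ring
      · intro n y hy
        have hy1 : ‖y‖ ≤ 1 := by
          simp [Metric.mem_ball, Complex.dist_eq] at hy
          exact le_of_lt hy
        have hcast : ((n : ℂ) + 1) = ((n + 1 : ℕ) : ℂ) := by push_cast; ring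
        have hnorm : ‖((n : ℂ) + 1) * b n * y ^ n‖ =
            ((n : ℝ) + 1) * ‖b n‖ * ‖y‖ ^ n := by
          rw [hcast, norm_mul, norm_mul, norm_pow, Complex.norm_natCast]
          push_cast; ring
        rw [hnorm]
        have hyn : ‖y‖ ^ n ≤ 1 := pow_le_one₀ (norm_nonneg y) hy1
        have h0 : 0 ≤ ((n : ℝ) + 1) * ‖b n‖ := by positivity
        exact mul_le_of_le_one_right h0 hyn
      · apply summable_of_ne_finset_zero (s := ∅)
        intro k _
        simp
    have hinv : HasDerivAt (fun w : ℂ => w⁻¹) (-(z ^ 2)⁻¹) z := hasDerivAt_inv hzne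
    have hG : HasDerivAt g (-(z ^ 2)⁻¹ + ∑' k : ℕ, ((k : ℂ) + 1) * b k * z ^ k) z := by
      have heq : g =ᶠ[nhds z] fun w => w⁻¹ + ∑' k : ℕ, b k * w ^ (k + 1) := by
        filter_upwards [isOpen_ne.mem_nhds (x := z) hzne] with w hw
        exact hg w hw
      exact HasDerivAt.congr_of_eventuallyEq (hinv.add hF) heq
    exact hG.deriv
  -- summability of the series in ℂ at z
  have hs1 : Summable fun k : ℕ => b k * z ^ (k + 2) := by
    apply Summable.of_norm
    apply habs.of_nonneg_of_le (fun k => norm_nonneg _)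
    intro k
    simp only [norm_mul, norm_pow]
    calc ‖b k‖ * r ^ (k + 2) ≤ ‖b k‖ * 1 := by
          have := pow_le_one₀ hr0 hr1 (n := k + 2)
          nlinarith [norm_nonneg (b k)]
      _ = ‖b k‖ := by ring
  have hs2 : Summable fun k : ℕ => ((k : ℂ) + 1) * b k * z ^ (k + 2) := by
    apply Summable.of_norm
    apply hSum.of_nonneg_of_le (fun k => norm_nonneg _)
    intro k
    simp only [norm_mul, norm_pow]
    have h1 : ‖(k : ℂ) + 1‖ = (k : ℝ) + 1 := by
      rw [show ((k : ℂ) + 1) = ((k + 1 : ℕ) : ℂ) by push_cast; ring, Complex.norm_natCast]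
      push_cast; ring
    rw [h1]
    have hpow : ‖z‖ ^ (k + 2) ≤ 1 := pow_le_one₀ hr0 hr1
    have h0 : 0 ≤ ((k : ℝ) + 1) * ‖b k‖ := by positivity
    exact mul_le_of_le_one_right h0 hpow
  -- z * g z = 1 + S1
  have hzg : z * g z = 1 + ∑' k : ℕ, b k * z ^ (k + 2) := by
    rw [hg z hzne, mul_add, mul_inv_cancel₀ hzne, ← tsum_mul_left]
    congr 1
    apply tsum_congr
    intro k
    ring
  -- z^2 * deriv g z = -1 + S2
  have hzd : z ^ 2 * deriv g z = -1 + ∑' k : ℕ, ((k : ℂ) + 1) * b k * z ^ (k + 2) := by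
    rw [hderiv, mul_add, mul_neg, mul_inv_cancel₀ (pow_ne_zero 2 hzne), ← tsum_mul_left]
    congr 1
    apply tsum_congr
    intro k
    ring
  -- the combination
  have hT : z ^ 2 * deriv g z + z * g z = ∑' k : ℕ, ((k : ℂ) + 2) * b k * z ^ (k + 2) := by
    rw [hzd, hzg]
    have : ∑' k : ℕ, ((k : ℂ) + 2) * b k * z ^ (k + 2) =
        ∑' k : ℕ, (((k : ℂ) + 1) * b k * z ^ (k + 2) + b k * z ^ (k + 2)) := by
      apply tsum_congr; intro k; ring
    rw [this, Summable.tsum_add hs2 hs1]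
    ring
  -- estimates
  have hA : ‖∑' k : ℕ, b k * z ^ (k + 2)‖ ≤
      ∑' k : ℕ, ‖b k‖ * r ^ (k + 2) := by
    have := norm_tsum_le_tsum_norm (f := fun k : ℕ => b k * z ^ (k + 2)) ?_
    · simpa [norm_mul, norm_pow] using this
    · rw [summable_norm_iff]; exact hs1
  have hB : ‖∑' k : ℕ, ((k : ℂ) + 2) * b k * z ^ (k + 2)‖ ≤
      ∑' k : ℕ, ((k : ℝ) + 2) * ‖b k‖ * r ^ (k + 2) := by
    have hsum3 : Summable fun k : ℕ => ((k : ℂ) + 2) * b k * z ^ (k + 2) := by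
      have : (fun k : ℕ => ((k : ℂ) + 2) * b k * z ^ (k + 2)) =
          fun k : ℕ => ((k : ℂ) + 1) * b k * z ^ (k + 2) + b k * z ^ (k + 2) := by
        funext k; ring
      rw [this]; exact hs2.add hs1
    have hnorms := norm_tsum_le_tsum_norm
      (f := fun k : ℕ => ((k : ℂ) + 2) * b k * z ^ (k + 2))
      (by rw [summable_norm_iff]; exact hsum3)
    have heqn : (∑' k : ℕ, ‖((k : ℂ) + 2) * b k * z ^ (k + 2)‖) =
        ∑' k : ℕ, ((k : ℝ) + 2) * ‖b k‖ * r ^ (k + 2) := by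
      apply tsum_congr
      intro k
      have hcast : ((k : ℂ) + 2) = ((k + 2 : ℕ) : ℂ) := by push_cast; ring
      rw [hcast, norm_mul, norm_mul, norm_pow, Complex.norm_natCast]
      push_cast; ring
    rw [heqn] at hnorms
    exact hnorms
  -- real summabilities
  have hrs1 : Summable fun k : ℕ => ‖b k‖ * r ^ (k + 2) := by
    apply habs.of_nonneg_of_le (fun k => by positivity)
    intro k
    have := pow_le_one₀ hr0 hr1 (n := k + 2)
    nlinarith [norm_nonneg (b k)]
  have hrs2 : Summable fun k : ℕ => ((k : ℝ) + 2) * ‖b k‖ * r ^ (k + 2) := by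
    apply ((hSum.add habs).of_nonneg_of_le (fun k => by positivity))
    intro k
    have hpow : r ^ (k + 2) ≤ 1 := pow_le_one₀ hr0 hr1
    have h0 : 0 ≤ ((k : ℝ) + 2) * ‖b k‖ := by positivity
    have h1 : ((k : ℝ) + 2) * ‖b k‖ * r ^ (k + 2)
        ≤ ((k : ℝ) + 2) * ‖b k‖ := mul_le_of_le_one_right h0 hpow
    linarith
  -- key bound: A + α B ≤ (1+2α) δ < 1
  have hδ0 : 0 ≤ δ := le_trans (tsum_nonneg (fun k => by positivity)) hb
  have h2α : (0:ℝ) < 1 + 2 * α := by linarith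
  have hkey : (∑' k : ℕ, ‖b k‖ * r ^ (k + 2)) +
      α * (∑' k : ℕ, ((k : ℝ) + 2) * ‖b k‖ * r ^ (k + 2)) < 1 := by
    have hcomb : (∑' k : ℕ, ‖b k‖ * r ^ (k + 2)) +
        α * (∑' k : ℕ, ((k : ℝ) + 2) * ‖b k‖ * r ^ (k + 2)) =
        ∑' k : ℕ, (‖b k‖ * r ^ (k + 2) +
          α * (((k : ℝ) + 2) * ‖b k‖ * r ^ (k + 2))) := by
      rw [Summable.tsum_add hrs1 (hrs2.mul_left α), tsum_mul_left]
    rw [hcomb]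
    have hle : ∑' k : ℕ, (‖b k‖ * r ^ (k + 2) +
        α * (((k : ℝ) + 2) * ‖b k‖ * r ^ (k + 2))) ≤
        ∑' k : ℕ, (1 + 2 * α) * (((k : ℝ) + 1) * ‖b k‖) := by
      apply Summable.tsum_le_tsum _ (hrs1.add (hrs2.mul_left α)) (hSum.mul_left _)
      intro k
      have hpow : r ^ (k + 2) ≤ 1 := pow_le_one₀ hr0 hr1
      have hpow0 : 0 ≤ r ^ (k + 2) := pow_nonneg hr0 _
      have hco : 1 + α * ((k : ℝ) + 2) ≤ (1 + 2 * α) * ((k : ℝ) + 1) := by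
        have : (0:ℝ) ≤ (k : ℝ) := Nat.cast_nonneg k
        nlinarith
      have e1 : ‖b k‖ * r ^ (k + 2) +
          α * (((k : ℝ) + 2) * ‖b k‖ * r ^ (k + 2)) =
          (1 + α * ((k : ℝ) + 2)) * (‖b k‖ * r ^ (k + 2)) := by ring
      rw [e1]
      have h0 : 0 ≤ 1 + α * ((k : ℝ) + 2) := by positivity
      have h1 : ‖b k‖ * r ^ (k + 2) ≤ ‖b k‖ :=
        mul_le_of_le_one_right (norm_nonneg _) hpow
      have h2 : (1 + α * ((k : ℝ) + 2)) * (‖b k‖ * r ^ (k + 2))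
          ≤ (1 + α * ((k : ℝ) + 2)) * ‖b k‖ :=
        mul_le_mul_of_nonneg_left h1 h0
      have h3 := mul_le_mul_of_nonneg_right hco (norm_nonneg (b k))
      nlinarith
    have : ∑' k : ℕ, (1 + 2 * α) * (((k : ℝ) + 1) * ‖b k‖) ≤ (1 + 2 * α) * δ := by
      rw [tsum_mul_left]
      exact mul_le_mul_of_nonneg_left hb (le_of_lt h2α)
    have hlt : (1 + 2 * α) * δ < 1 := by
      rw [lt_div_iff₀ h2α] at hδ
      linarith
    linarith
  -- finish
  rw [hT, hzg]
  have hre : (1 + ∑' k : ℕ, b k * z ^ (k + 2)).re ≥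
      1 - ∑' k : ℕ, ‖b k‖ * r ^ (k + 2) := by
    have h1 : (1 + ∑' k : ℕ, b k * z ^ (k + 2)).re =
        1 + (∑' k : ℕ, b k * z ^ (k + 2)).re := by simp
    rw [h1]
    have h2 := Complex.abs_re_le_norm (∑' k : ℕ, b k * z ^ (k + 2))
    have h3 := neg_abs_le ((∑' k : ℕ, b k * z ^ (k + 2)).re)
    linarith
  have hαB : α * ‖∑' k : ℕ, ((k : ℂ) + 2) * b k * z ^ (k + 2)‖ ≤
      α * ∑' k : ℕ, ((k : ℝ) + 2) * ‖b k‖ * r ^ (k + 2) :=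
    mul_le_mul_of_nonneg_left hB hα
  linarith
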